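/- Let α₁,…,αₙ ∈ ℂ, a, A ∈ ℂ with |αᵢ - (a+A)/2| ≤ (1/2)|A - a| for all i, and let (pᵢ) be a probability sequence. Then |Σᵢ pᵢαᵢ² - (Σᵢ pᵢαᵢ)²| ≤ (1/2)|A - a| Σᵢ pᵢ|αᵢ - Σⱼ pⱼαⱼ| ≤ (1/2)|A - a| (Σᵢ pᵢ|αᵢ|² - |Σᵢ pᵢαᵢ|²)^{1/2}. -/

import Mathlib

theorem stmt15 (n : ℕ) (α : Fin n → ℂ) (a A : ℂ)
    (hα : ∀ i, ‖α i - (a + A) / 2‖ ≤ ‖A - a‖ / 2)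
    (p : Fin n → ℝ) (hp : ∀ i, 0 ≤ p i) (hp1 : ∑ i, p i = 1) :
    ‖∑ i, (p i : ℂ) * α i ^ 2 - (∑ i, (p i : ℂ) * α i) ^ 2‖ ≤
      (1 / 2) * ‖A - a‖ *
        ∑ i, p i * ‖α i - ∑ j, (p j : ℂ) * α j‖ ∧
    (1 / 2) * ‖A - a‖ *
        ∑ i, p i * ‖α i - ∑ j, (p j : ℂ) * α j‖ ≤
      (1 / 2) * ‖A - a‖ *
        Real.sqrt (∑ i, p i * ‖α i‖ ^ 2 -
          ‖∑ i, (p i : ℂ) * α i‖ ^ 2) := by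
  set m : ℂ := ∑ j, (p j : ℂ) * α j with hm
  set c : ℂ := (a + A) / 2 with hc
  have hps : ∑ i, (p i : ℂ) = 1 := by
    rw [← Complex.ofReal_sum, hp1]; norm_num
  have key : ∑ i, (p i : ℂ) * α i ^ 2 - m ^ 2
      = ∑ i, (p i : ℂ) * ((α i - m) * (α i - c)) := by
    have : ∀ i, (p i : ℂ) * ((α i - m) * (α i - c))
        = (p i : ℂ) * α i ^ 2 - c * ((p i : ℂ) * α i) - m * ((p i : ℂ) * α i)
          + m * c * (p i : ℂ) := by intro i; ring
    rw [Finset.sum_congr rfl fun i _ => this i]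
    rw [Finset.sum_add_distrib, Finset.sum_sub_distrib, Finset.sum_sub_distrib,
      ← Finset.mul_sum, ← Finset.mul_sum, ← Finset.mul_sum, hps, ← hm]
    ring
  constructor
  · rw [key]
    calc ‖∑ i, (p i : ℂ) * ((α i - m) * (α i - c))‖
        ≤ ∑ i, ‖(p i : ℂ) * ((α i - m) * (α i - c))‖ :=
          norm_sum_le _ _
      _ ≤ ∑ i, p i * ‖α i - m‖ * (‖A - a‖ / 2) := by
          apply Finset.sum_le_sum
          intro i _
          rw [norm_mul, norm_mul, Complex.norm_real, Real.norm_of_nonneg (hp i), mul_assoc]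
          exact mul_le_mul_of_nonneg_left
            (mul_le_mul_of_nonneg_left (hα i) (norm_nonneg _)) (hp i)
      _ = (1 / 2) * ‖A - a‖ * ∑ i, p i * ‖α i - m‖ := by
          rw [← Finset.sum_mul]; ring
  · apply mul_le_mul_of_nonneg_left _ (by positivity)
    have hsq : ∑ i, p i * ‖α i - m‖ ^ 2
        = ∑ i, p i * ‖α i‖ ^ 2 - ‖m‖ ^ 2 := by
      have expand : ∀ i, p i * ‖α i - m‖ ^ 2
          = p i * ‖α i‖ ^ 2
            - 2 * (p i * (α i * (starRingEnd ℂ) m).re) + p i * ‖m‖ ^ 2 := by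
        intro i
        have := Complex.sq_norm (α i - m)
        rw [Complex.sq_norm, Complex.sq_norm, Complex.sq_norm,
          Complex.normSq_sub]
        simp [Complex.mul_conj, Complex.normSq_apply, Complex.mul_re, Complex.conj_re,
          Complex.conj_im]
        ring
      rw [Finset.sum_congr rfl fun i _ => expand i, Finset.sum_add_distrib,
        Finset.sum_sub_distrib, ← Finset.sum_mul, hp1, ← Finset.mul_sum]
      have : ∑ i, p i * (α i * (starRingEnd ℂ) m).re
          = (m * (starRingEnd ℂ) m).re := by
        rw [hm, Finset.sum_mul, Complex.re_sum]
        apply Finset.sum_congr rfl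
        intro i _
        rw [mul_assoc, Complex.re_ofReal_mul]
      rw [this, Complex.mul_conj, ← Complex.sq_norm, Complex.ofReal_re]
      ring
    have hcs : (∑ i, p i * ‖α i - m‖) ^ 2
        ≤ ∑ i, p i * ‖α i - m‖ ^ 2 := by
      have h := Finset.sum_mul_sq_le_sq_mul_sq Finset.univ
        (fun i => Real.sqrt (p i)) (fun i => Real.sqrt (p i) * ‖α i - m‖)
      have e1 : ∀ i : Fin n, Real.sqrt (p i) * (Real.sqrt (p i) * ‖α i - m‖)
          = p i * ‖α i - m‖ := fun i => by
        rw [← mul_assoc, Real.mul_self_sqrt (hp i)]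
      have e2 : ∀ i : Fin n, Real.sqrt (p i) ^ 2 = p i := fun i => Real.sq_sqrt (hp i)
      have e3 : ∀ i : Fin n, (Real.sqrt (p i) * ‖α i - m‖) ^ 2
          = p i * ‖α i - m‖ ^ 2 := fun i => by
        rw [mul_pow, Real.sq_sqrt (hp i)]
      simp only [Finset.sum_congr rfl fun i _ => e1 i,
        Finset.sum_congr rfl fun i _ => e2 i,
        Finset.sum_congr rfl fun i _ => e3 i, hp1, one_mul] at h
      exact h
    rw [← hsq]
    have h0 : 0 ≤ ∑ i, p i * ‖α i - m‖ :=
      Finset.sum_nonneg fun i _ => mul_nonneg (hp i) (norm_nonneg _)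
    exact (Real.le_sqrt h0 (Finset.sum_nonneg fun i _ => mul_nonneg (hp i) (sq_nonneg _))).mpr hcs
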